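/- For every positive integer n, 2 B*_{2n} = χ(n) + sum_{r=0}^{n} (-1)^{n+r} C(n+r, 2r) B_{2r}/(n+r), where χ(n) equals 1 if n ≡ 1 (mod 3), -1 if n ≡ 2 (mod 3), and 0 if n ≡ 0 (mod 3). -/

import Mathlib

open Finset

/-- The modified Bernoulli numbers of Zagier. -/
noncomputable def zagierBstar (n : ℕ) : ℚ :=
  ∑ r ∈ Finset.range (n + 1), ((n + r).choose (2 * r) : ℚ) * bernoulli r / (n + r)

namespace ZagierProof

open Polynomial

/-- Coefficients of the Chebyshev-like polynomials Φ. -/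
def acoef (m r : ℕ) : ℕ := (m + r).choose (2 * r) + (m + r - 1).choose (2 * r)

/-- Φ_m(u) = x^m + x^{-m} where u = x + 1/x - 2. -/
noncomputable def Phi : ℕ → ℚ[X]
  | 0 => 2
  | 1 => X + 2
  | n + 2 => (X + 2) * Phi (n + 1) - Phi n

lemma Phi_rec (n : ℕ) : Phi (n + 2) = (X + 2) * Phi (n + 1) - Phi n := by simp [Phi]

lemma acoef_zero (m : ℕ) : acoef m 0 = 2 := by simp [acoef]

lemma acoef_eq_zero {m r : ℕ} (h : m < r) : acoef m r = 0 := by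
  have h1 : (m + r).choose (2 * r) = 0 := Nat.choose_eq_zero_of_lt (by omega)
  have h2 : (m + r - 1).choose (2 * r) = 0 := Nat.choose_eq_zero_of_lt (by omega)
  simp [acoef, h1, h2]

lemma acoef_rec (m r : ℕ) :
    acoef (m + 2) (r + 1) + acoef m (r + 1) = acoef (m + 1) r + 2 * acoef (m + 1) (r + 1) := by
  have h1 : (m + r + 3).choose (2*r + 2) = (m + r + 2).choose (2*r + 1) + (m + r + 2).choose (2*r + 2) :=
    Nat.choose_succ_succ _ _
  have h2 : (m + r + 2).choose (2*r + 1) = (m + r + 1).choose (2*r) + (m + r + 1).choose (2*r + 1) :=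
    Nat.choose_succ_succ _ _
  have h3 : (m + r + 1).choose (2*r + 1) = (m + r).choose (2*r) + (m + r).choose (2*r + 1) :=
    Nat.choose_succ_succ _ _
  have h4 : (m + r + 1).choose (2*r + 2) = (m + r).choose (2*r + 1) + (m + r).choose (2*r + 2) :=
    Nat.choose_succ_succ _ _
  simp only [acoef]
  have e1 : m + 2 + (r + 1) = m + r + 3 := by omega
  have e3 : m + (r + 1) = m + r + 1 := by omega
  have e5 : m + 1 + r = m + r + 1 := by omega
  have e7 : m + 1 + (r + 1) = m + r + 2 := by omega
  have e9 : 2 * (r + 1) = 2*r + 2 := by omega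
  rw [e9, e1, e3, e5, e7,
    show m + r + 3 - 1 = m + r + 2 from by omega,
    show m + r + 1 - 1 = m + r from by omega,
    show m + r + 2 - 1 = m + r + 1 from by omega]
  omega

lemma two_mul_choose (m r : ℕ) (hm : 0 < m) :
    2 * m * ((m + r).choose (2 * r)) = (m + r) * acoef m r := by
  by_cases hr : r ≤ m
  · have h := Nat.choose_mul_succ_eq (m + r - 1) (2 * r)
    have hm1 : m + r - 1 + 1 = m + r := by omega
    rw [hm1] at h
    have hsub : m + r - 2 * r = m - r := by omega
    rw [hsub] at h
    have h' : (m + r) * ((m + r - 1).choose (2 * r)) = (m - r) * ((m + r).choose (2 * r)) := by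
      rw [mul_comm (m + r) _, h, mul_comm]
    simp only [acoef, Nat.mul_add]
    rw [h', ← Nat.add_mul, show m + r + (m - r) = 2 * m from by omega]
  · have h1 : (m + r).choose (2 * r) = 0 := Nat.choose_eq_zero_of_lt (by omega)
    have h2 : (m + r - 1).choose (2 * r) = 0 := Nat.choose_eq_zero_of_lt (by omega)
    simp [acoef, h1, h2]

/-- The umbral Bernoulli functional: `X^r ↦ bernoulli r`. -/
noncomputable def L : ℚ[X] →ₗ[ℚ] ℚ :=
  Polynomial.lsum (fun n => LinearMap.toSpanSingleton ℚ ℚ (_root_.bernoulli n))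

lemma L_monomial (m : ℕ) (a : ℚ) : L (monomial m a) = a * _root_.bernoulli m := by
  rw [L, Polynomial.lsum_apply, Polynomial.sum_monomial_index]
  · rw [LinearMap.toSpanSingleton_apply, smul_eq_mul]
  · simp

/-- The even umbral functional `X^r ↦ (-1)^r bernoulli (2r)`. -/
noncomputable def L2 : ℚ[X] →ₗ[ℚ] ℚ :=
  Polynomial.lsum (fun n => LinearMap.toSpanSingleton ℚ ℚ ((-1) ^ n * _root_.bernoulli (2 * n)))

lemma L2_monomial (m : ℕ) (a : ℚ) :
    L2 (monomial m a) = a * ((-1) ^ m * _root_.bernoulli (2 * m)) := by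
  rw [L2, Polynomial.lsum_apply, Polynomial.sum_monomial_index]
  · rw [LinearMap.toSpanSingleton_apply, smul_eq_mul]
  · simp

lemma L_sum_range (p : ℚ[X]) (N : ℕ) (h : p.natDegree < N) :
    L p = ∑ r ∈ range N, p.coeff r * _root_.bernoulli r := by
  rw [L, Polynomial.lsum_apply, p.sum_over_range' _ N h]
  · simp [LinearMap.toSpanSingleton_apply, smul_eq_mul]
  · intro n; simp

lemma L2_sum_range (p : ℚ[X]) (N : ℕ) (h : p.natDegree < N) :
    L2 p = ∑ r ∈ range N, p.coeff r * ((-1) ^ r * _root_.bernoulli (2 * r)) := by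
  rw [L2, Polynomial.lsum_apply, p.sum_over_range' _ N h]
  · simp [LinearMap.toSpanSingleton_apply, smul_eq_mul]
  · intro n; simp

/-- The key umbral property of Bernoulli numbers. -/
lemma L_comp_X_add_one (p : ℚ[X]) :
    L (p.comp (X + 1)) = L p + p.derivative.eval 0 := by
  induction p using Polynomial.induction_on' with
  | add p q hp hq => simp only [add_comp, map_add, derivative_add, eval_add, hp, hq]; ring
  | monomial m a =>
    have hcomp : (monomial m a : ℚ[X]).comp (X + 1) = C a * (X + 1) ^ m := by
      simp [monomial_comp]
    have hexp : ((X : ℚ[X]) + 1) ^ m = ∑ k ∈ range (m + 1), monomial k ((m.choose k : ℚ)) := by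
      rw [add_pow]
      refine Finset.sum_congr rfl fun k hk => ?_
      rw [one_pow, mul_one, ← C_eq_natCast, mul_comm, ← C_mul_X_pow_eq_monomial, C_eq_natCast]
    rw [hcomp, hexp, Finset.mul_sum]
    have hC : ∀ k, C a * monomial k ((m.choose k : ℚ)) = monomial k (a * (m.choose k : ℚ)) := by
      intro k; rw [C_mul_monomial]
    simp_rw [hC]
    rw [map_sum]
    simp_rw [L_monomial]
    rw [Finset.sum_range_succ]
    have hsb : ∑ k ∈ range m, a * (m.choose k : ℚ) * _root_.bernoulli k
        = a * (if m = 1 then 1 else 0) := by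
      simp_rw [mul_assoc]
      rw [← Finset.mul_sum, _root_.sum_bernoulli]
    rw [hsb, Nat.choose_self, derivative_monomial, eval_monomial]
    match m with
    | 0 => norm_num
    | 1 => norm_num [_root_.bernoulli_one]; ring
    | (k+2) => norm_num [pow_succ]; intro h; omega

lemma L_comp_X_add_two (p : ℚ[X]) :
    L (p.comp (X + 2)) = L p + p.derivative.eval 0 + p.derivative.eval 1 := by
  have h : (X + 2 : ℚ[X]) = (X + 1).comp (X + 1) := by
    simp [add_comp]; ring
  rw [h, ← comp_assoc, L_comp_X_add_one, L_comp_X_add_one, derivative_comp]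
  simp [eval_comp]

lemma L_comp_neg_X_sq (p : ℚ[X]) : L (p.comp (-(X ^ 2))) = L2 p := by
  induction p using Polynomial.induction_on' with
  | add p q hp hq => simp only [add_comp, map_add, hp, hq]
  | monomial m a =>
    have h1 : (monomial m a : ℚ[X]).comp (-(X ^ 2)) = monomial (2 * m) (a * (-1) ^ m) := by
      rw [monomial_comp, neg_pow, ← pow_mul, ← C_mul_X_pow_eq_monomial,
        map_mul, map_pow, map_neg, map_one]
      ring
    rw [h1, L_monomial, L2_monomial]
    ring

lemma Phi_natDegree_le (m : ℕ) : (Phi m).natDegree ≤ m := by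
  induction m using Nat.twoStepInduction with
  | zero => simp [Phi]
  | one =>
    have h2 : (2 : ℚ[X]) = C 2 := (map_ofNat C 2).symm
    simp only [Phi, h2]
    exact le_of_eq (natDegree_X_add_C _)
  | more n ih1 ih2 =>
    rw [Phi_rec]
    refine (natDegree_sub_le _ _).trans ?_
    simp only [max_le_iff]
    constructor
    · refine (natDegree_mul_le).trans ?_
      have h2 : (2 : ℚ[X]) = C 2 := (map_ofNat C 2).symm
      have : ((X : ℚ[X]) + 2).natDegree ≤ 1 := by rw [h2]; exact le_of_eq (natDegree_X_add_C _)
      omega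
    · omega

lemma Phi_comp_neg (m : ℕ) : (Phi m).comp (-X - 4) = C ((-1) ^ m) * Phi m := by
  induction m using Nat.twoStepInduction with
  | zero => simp [Phi]
  | one => simp [Phi, add_comp]; ring
  | more n ih1 ih2 =>
    rw [Phi_rec, sub_comp, mul_comp, add_comp, X_comp, ih1, ih2]
    have h2 : ((2 : ℚ[X])).comp (-X - 4) = 2 := by simp
    rw [h2]
    have : ((-1 : ℚ)) ^ (n + 2) = (-1) ^ n := by ring
    rw [this, show ((-1 : ℚ)) ^ (n + 1) = -(-1) ^ n from by ring]
    simp only [map_neg, map_pow]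
    ring

lemma Phi_add_four (k : ℕ) : Phi (k + 4) = (X ^ 2 + 4 * X + 2) * Phi (k + 2) - Phi k := by
  have h1 := Phi_rec (k + 2)
  have h2 := Phi_rec (k + 1)
  have h3 := Phi_rec k
  rw [show k + 2 + 2 = k + 4 from rfl] at h1
  rw [show k + 1 + 2 = k + 3 from rfl] at h2
  rw [h1, h2, h3]
  ring

lemma Phi_two_mul (n : ℕ) : Phi (2 * n) = (Phi n).comp (X ^ 2 + 4 * X) := by
  induction n using Nat.twoStepInduction with
  | zero => simp [Phi]
  | one =>
    rw [show 2 * 1 = 0 + 2 from rfl, Phi_rec]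
    simp [Phi, add_comp]
    ring
  | more n ih1 ih2 =>
    rw [show 2 * (n + 2) = 2 * n + 4 from by ring, Phi_add_four,
      show 2 * n + 2 = 2 * (n + 1) from by ring, ih1, ih2, Phi_rec,
      sub_comp, mul_comp, add_comp, X_comp]
    have h2 : ((2 : ℚ[X])).comp (X ^ 2 + 4 * X) = 2 := by simp
    rw [h2]

lemma Phi_eval_neg_three (n : ℕ) :
    (Phi n).eval (-3) = (if n % 3 = 0 then 2 else -1) ∧
      (derivative (Phi n)).eval (-3)
        = (n : ℚ) * (if n % 3 = 1 then 1 else if n % 3 = 2 then -1 else 0) := by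
  induction n using Nat.twoStepInduction with
  | zero => simp [Phi]
  | one => norm_num [Phi]
  | more n ih1 ih2 =>
    obtain ⟨e1, d1⟩ := ih1
    obtain ⟨e2, d2⟩ := ih2
    rw [Phi_rec]
    simp only [derivative_sub, derivative_mul, derivative_add, derivative_X, derivative_ofNat,
      eval_sub, eval_mul, eval_add, eval_X, eval_ofNat, eval_one, add_zero, one_mul]
    rw [e1, e2, d1, d2]
    have h3 : n % 3 = 0 ∨ n % 3 = 1 ∨ n % 3 = 2 := by omega
    rcases h3 with h | h | h
    · have ha : (n + 1) % 3 = 1 := by omega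
      have hb : (n + 2) % 3 = 2 := by omega
      simp [h, ha, hb]
      constructor <;> ring
    · have ha : (n + 1) % 3 = 2 := by omega
      have hb : (n + 2) % 3 = 0 := by omega
      simp [h, ha, hb]
      constructor <;> ring
    · have ha : (n + 1) % 3 = 0 := by omega
      have hb : (n + 2) % 3 = 1 := by omega
      simp [h, ha, hb]
      constructor <;> ring

lemma Phi_coeff : ∀ m r, (Phi m).coeff r = (acoef m r : ℚ) := by
  intro m
  induction m using Nat.twoStepInduction with
  | zero =>
    intro r
    match r with
    | 0 => norm_num [Phi, acoef]
    | (r + 1) => rw [acoef_eq_zero (by omega)]; simp [Phi]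
  | one =>
    intro r
    match r with
    | 0 => norm_num [Phi, acoef]
    | 1 => norm_num [Phi, acoef]
    | (r + 2) => rw [acoef_eq_zero (by omega)]; simp [Phi, coeff_X]
  | more n ih1 ih2 =>
    intro r
    rw [Phi_rec, coeff_sub, add_mul, coeff_add]
    have h2 : (2 : ℚ[X]) = C 2 := (map_ofNat C 2).symm
    rw [h2, coeff_C_mul]
    match r with
    | 0 =>
      rw [mul_coeff_zero, coeff_X_zero, zero_mul, ih1, ih2]
      norm_num [acoef]
    | (r + 1) =>
      rw [coeff_X_mul, ih1, ih2, ih2]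
      have h := congrArg (Nat.cast : ℕ → ℚ) (acoef_rec n r)
      push_cast at h
      linarith

lemma zagier_eq (n : ℕ) (hn : 0 < n) :
    zagierBstar (2 * n) = L (Phi (2 * n)) / (4 * n) := by
  have hn1 : (1 : ℚ) ≤ (n : ℚ) := by exact_mod_cast hn
  rw [zagierBstar, L_sum_range (Phi (2 * n)) (2 * n + 1)
    (by have := Phi_natDegree_le (2 * n); omega), Finset.sum_div]
  refine Finset.sum_congr rfl fun r _ => ?_
  rw [Phi_coeff]
  have key := two_mul_choose (2 * n) r (by omega)
  have keyq : (2 * (2 * (n : ℚ)) * ((2 * n + r).choose (2 * r) : ℚ))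
      = (2 * (n : ℚ) + r) * (acoef (2 * n) r : ℚ) := by exact_mod_cast key
  have hd1 : ((2 * n : ℕ) : ℚ) + (r : ℚ) ≠ 0 := by
    push_cast; linarith [Nat.cast_nonneg (α := ℚ) r]
  have hd2 : (4 : ℚ) * n ≠ 0 := by linarith
  rw [div_eq_div_iff hd1 hd2]
  push_cast
  linear_combination _root_.bernoulli r * keyq

lemma rhs_eq (n : ℕ) (hn : 0 < n) :
    ∑ r ∈ Finset.range (n + 1), (-1 : ℚ) ^ (n + r) *
        ((n + r).choose (2 * r) : ℚ) * _root_.bernoulli (2 * r) / (n + r)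
      = L ((Phi n).comp (X ^ 2 - 4)) / (2 * n) := by
  have hn1 : (1 : ℚ) ≤ (n : ℚ) := by exact_mod_cast hn
  have hcomp : ((X : ℚ[X]) ^ 2 - 4) = (-X - 4 : ℚ[X]).comp (-(X ^ 2)) := by
    rw [sub_comp, neg_comp, X_comp, ofNat_comp]
    push_cast
    ring
  rw [hcomp, ← comp_assoc, Phi_comp_neg, mul_comp, C_comp, ← Polynomial.smul_eq_C_mul,
    map_smul, smul_eq_mul, L_comp_neg_X_sq,
    L2_sum_range (Phi n) (n + 1) (by have := Phi_natDegree_le n; omega),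
    Finset.mul_sum, Finset.sum_div]
  refine Finset.sum_congr rfl fun r _ => ?_
  rw [Phi_coeff]
  have key := two_mul_choose n r hn
  have keyq : (2 * (n : ℚ) * ((n + r).choose (2 * r) : ℚ))
      = ((n : ℚ) + r) * (acoef n r : ℚ) := by exact_mod_cast key
  have hd1 : (n : ℚ) + (r : ℚ) ≠ 0 := by linarith [Nat.cast_nonneg (α := ℚ) r]
  have hd2 : (2 : ℚ) * n ≠ 0 := by linarith
  rw [div_eq_div_iff hd1 hd2]
  linear_combination ((-1 : ℚ) ^ n * (-1 : ℚ) ^ r * _root_.bernoulli (2 * r)) * keyq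

lemma L_split (n : ℕ) : L (Phi (2 * n)) = L ((Phi n).comp (X ^ 2 - 4))
    + 2 * (derivative (Phi n)).eval (-3) := by
  have hcomp : Phi (2 * n) = ((Phi n).comp (X ^ 2 - 4)).comp (X + 2) := by
    rw [Phi_two_mul, comp_assoc]
    congr 1
    rw [sub_comp, pow_comp, X_comp, ofNat_comp]
    push_cast
    ring
  rw [hcomp, L_comp_X_add_two, derivative_comp]
  simp [eval_comp]
  norm_num

end ZagierProof

theorem zagierBstar_even_formula (n : ℕ) (hn : 0 < n) :
    2 * zagierBstar (2 * n) =
      (if n % 3 = 1 then (1 : ℚ) else if n % 3 = 2 then -1 else 0) +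
      ∑ r ∈ Finset.range (n + 1), (-1 : ℚ) ^ (n + r) *
        ((n + r).choose (2 * r) : ℚ) * bernoulli (2 * r) / (n + r) := by
  have hn1 : (1 : ℚ) ≤ (n : ℚ) := by exact_mod_cast hn
  have h4 := (ZagierProof.Phi_eval_neg_three n).2
  rw [ZagierProof.zagier_eq n hn, ZagierProof.rhs_eq n hn, ZagierProof.L_split n, h4]
  have hd2 : (2 : ℚ) * n ≠ 0 := by linarith
  field_simp
  ring
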